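/- Let Q : B_d → R^d be a monotone map (⟨u − v, Q(u) − Q(v)⟩ ≥ 0 for all u, v ∈ B_d) which is a homeomorphism onto its image. Then for every r ∈ (0,1) and every boundary point y of Q(rB_d), there exists a ray T emanating from y such that the closure of Q(rB_d) intersects T only at y. -/

import Mathlib

open Metric Set Finset
open RealInnerProductSpace

/-- Game-value-type lemma via hyperplane separation: if the quadratic form of `B` is
nonnegative on the nonnegative orthant, then some simplex vector `lam` has `B lam ≥ 0`. -/
lemma exists_simplex_nonneg_mulVec {ι : Type*} [Fintype ι] [Nonempty ι] [DecidableEq ι]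
    (B : ι → ι → ℝ)
    (hq : ∀ μ : ι → ℝ, (∀ i, 0 ≤ μ i) → 0 ≤ ∑ i, ∑ j, μ i * μ j * B i j) :
    ∃ lam ∈ stdSimplex ℝ ι, ∀ i, 0 ≤ ∑ j, B i j * lam j := by
  by_contra hcon
  push_neg at hcon
  -- the linear map `lam ↦ B · lam`
  set L : (ι → ℝ) →ₗ[ℝ] (ι → ℝ) := Matrix.mulVecLin (fun i j => B i j) with hL
  have hLapp : ∀ lam i, L lam i = ∑ j, B i j * lam j := by
    intro lam i
    rfl
  set C : Set (ι → ℝ) := L '' stdSimplex ℝ ι with hC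
  set D : Set (ι → ℝ) := {q | ∀ i, 0 ≤ q i} with hD
  have hCconv : Convex ℝ C := (convex_stdSimplex ℝ ι).linear_image L
  have hCcomp : IsCompact C := (isCompact_stdSimplex ℝ ι).image L.continuous_of_finiteDimensional
  have hDconv : Convex ℝ D := by
    intro a ha b hb s t hs ht _
    intro i
    exact add_nonneg (mul_nonneg hs (ha i)) (mul_nonneg ht (hb i))
  have hDclosed : IsClosed D := by
    have : D = ⋂ i, {q : ι → ℝ | 0 ≤ q i} := by
      ext q; simp [hD]
    rw [this]
    exact isClosed_iInter fun i => isClosed_le continuous_const (continuous_apply i)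
  have hdisj : Disjoint C D := by
    rw [Set.disjoint_left]
    rintro c ⟨lam, hlam, rfl⟩ hcD
    obtain ⟨i, hi⟩ := hcon lam hlam
    exact absurd (by simpa [hLapp] using hcD i) (not_le.mpr hi)
  obtain ⟨f, u, v, hfu, huv, hfv⟩ :=
    geometric_hahn_banach_compact_closed hCconv hCcomp hDconv hDclosed hdisj
  have h0D : (0 : ι → ℝ) ∈ D := fun i => le_refl 0
  have hv0 : v < 0 := by simpa using hfv 0 h0D
  set μ : ι → ℝ := fun i => f (Pi.single i 1) with hμ
  have hμnonneg : ∀ i, 0 ≤ μ i := by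
    intro i
    by_contra hneg
    push_neg at hneg
    -- scale: t • single i 1 ∈ D for t ≥ 0, f of it = t * μ i → -∞
    have hmem : ∀ t : ℝ, 0 ≤ t → (t • (Pi.single i (1:ℝ) : ι → ℝ)) ∈ D := by
      intro t ht j
      by_cases hji : j = i
      · subst hji; simp [Pi.single_apply, ht]
      · simp [Pi.single_apply, hji]
    have ht : (0:ℝ) ≤ (2 * v) / μ i := by
      exact le_of_lt (div_pos_of_neg_of_neg (by linarith) hneg)
    have := hfv _ (hmem _ ht)
    rw [map_smul] at this
    have : v < (2 * v) / μ i * μ i := this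
    rw [div_mul_cancel₀] at this
    · linarith
    · exact ne_of_lt hneg
  -- f expanded over the basis
  have hfexp : ∀ x : ι → ℝ, f x = ∑ i, x i * μ i := by
    intro x
    have hsingle : ∀ i : ι, (fun j => if i = j then (1:ℝ) else 0) = (Pi.single i 1 : ι → ℝ) := by
      intro i; ext j; rw [Pi.single_apply]; simp [eq_comm]
    have := (f : (ι → ℝ) →ₗ[ℝ] ℝ).pi_apply_eq_sum_univ x
    simpa [hμ, hsingle, smul_eq_mul] using this
  -- μ is not zero
  have hμne : ∃ i, 0 < μ i := by
    by_contra hall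
    push_neg at hall
    have hμzero : ∀ i, μ i = 0 := fun i => le_antisymm (hall i) (hμnonneg i)
    have hmem : L (fun _ => (Fintype.card ι : ℝ)⁻¹) ∈ C := by
      refine ⟨_, ?_, rfl⟩
      constructor
      · intro i; positivity
      · rw [Finset.sum_const, Finset.card_univ, nsmul_eq_mul,
          mul_inv_cancel₀ (Nat.cast_ne_zero.mpr Fintype.card_ne_zero)]
    have := hfu _ hmem
    rw [hfexp] at this
    simp [hμzero] at this
    linarith
  have hμsum : 0 < ∑ i, μ i := by
    obtain ⟨i, hi⟩ := hμne
    exact Finset.sum_pos' (fun j _ => hμnonneg j) ⟨i, Finset.mem_univ i, hi⟩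
  -- the normalized μ lies in the simplex
  set lam : ι → ℝ := fun i => μ i / ∑ k, μ k with hlam
  have hlam_mem : lam ∈ stdSimplex ℝ ι := by
    constructor
    · intro i; exact div_nonneg (hμnonneg i) (le_of_lt hμsum)
    · rw [← Finset.sum_div, div_self (ne_of_gt hμsum)]
  have hLlam : L lam ∈ C := ⟨lam, hlam_mem, rfl⟩
  have hflt : f (L lam) < u := hfu _ hLlam
  have hfge : 0 ≤ f (L lam) := by
    rw [hfexp]
    have : ∑ i, (L lam) i * μ i = (∑ k, μ k)⁻¹ * ∑ i, ∑ j, μ i * μ j * B i j := by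
      rw [Finset.mul_sum]
      refine Finset.sum_congr rfl fun i _ => ?_
      rw [hLapp, hlam]
      simp only [div_eq_mul_inv]
      rw [Finset.sum_mul, Finset.mul_sum]
      refine Finset.sum_congr rfl fun j _ => ?_
      ring
    rw [this]
    exact mul_nonneg (inv_nonneg.mpr (le_of_lt hμsum)) (hq μ hμnonneg)
  linarith

/-- Existence of a solution to the (weak) Minty variational inequality on a compact
convex set, for a monotone map. Brouwer-free: via `exists_simplex_nonneg_mulVec`. -/
lemma minty_weak {E : Type*} [NormedAddCommGroup E] [InnerProductSpace ℝ E]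
    (F : E → E) (K : Set E) (hK : IsCompact K) (hKc : Convex ℝ K) (hne : K.Nonempty)
    (hmono : ∀ u ∈ K, ∀ v ∈ K, 0 ≤ ⟪u - v, F u - F v⟫) :
    ∃ z ∈ K, ∀ v ∈ K, 0 ≤ ⟪F v, v - z⟫ := by
  classical
  have hmain : (K ∩ ⋂ v : K, {z | 0 ≤ ⟪F v.1, v.1 - z⟫}).Nonempty := by
    apply hK.inter_iInter_nonempty
    · intro v
      exact isClosed_le continuous_const
        (continuous_const.inner (continuous_const.sub continuous_id))
    · intro u
      rcases u.eq_empty_or_nonempty with rfl | hune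
      · simpa using hne
      haveI : Nonempty {i // i ∈ u} := ⟨⟨hune.choose, hune.choose_spec⟩⟩
      set B : {i // i ∈ u} → {i // i ∈ u} → ℝ :=
        fun i j => ⟪F i.1.1, i.1.1 - j.1.1⟫ with hB
      have hBsum : ∀ i j, 0 ≤ B i j + B j i := by
        intro i j
        have : B i j + B j i = ⟪i.1.1 - j.1.1, F i.1.1 - F j.1.1⟫ := by
          simp only [hB, inner_sub_left, inner_sub_right, real_inner_comm]
          ring
        rw [this]
        exact hmono _ i.1.2 _ j.1.2
      have hq : ∀ μ : {i // i ∈ u} → ℝ, (∀ i, 0 ≤ μ i) →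
          0 ≤ ∑ i, ∑ j, μ i * μ j * B i j := by
        intro μ hμ
        have e1 : ∑ i, ∑ j, μ i * μ j * B j i = ∑ i, ∑ j, μ i * μ j * B i j := by
          rw [Finset.sum_comm]
          exact Finset.sum_congr rfl fun i _ => Finset.sum_congr rfl fun j _ => by ring
        have e2 : 0 ≤ ∑ i, ∑ j, μ i * μ j * (B i j + B j i) := by
          refine Finset.sum_nonneg fun i _ => Finset.sum_nonneg fun j _ => ?_
          exact mul_nonneg (mul_nonneg (hμ i) (hμ j)) (hBsum i j)
        have e3 : ∑ i, ∑ j, μ i * μ j * (B i j + B j i)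
            = (∑ i, ∑ j, μ i * μ j * B i j) + ∑ i, ∑ j, μ i * μ j * B j i := by
          rw [← Finset.sum_add_distrib]
          refine Finset.sum_congr rfl fun i _ => ?_
          rw [← Finset.sum_add_distrib]
          exact Finset.sum_congr rfl fun j _ => by ring
        rw [e3, e1] at e2
        linarith
      obtain ⟨lam, hlam_mem, hlam⟩ := exists_simplex_nonneg_mulVec B hq
      set z : E := ∑ j : {i // i ∈ u}, lam j • (j.1.1 : E) with hz
      have hzK : z ∈ K := by
        refine hKc.sum_mem (fun j _ => hlam_mem.1 j) ?_ (fun j _ => j.1.2)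
        exact hlam_mem.2
      refine ⟨z, hzK, ?_⟩
      simp only [Set.mem_iInter₂]
      intro v hv
      have hdecomp : v.1 - z = ∑ j : {i // i ∈ u}, lam j • (v.1 - j.1.1) := by
        have h1 : v.1 = ∑ j : {i // i ∈ u}, lam j • (v.1 : E) := by
          rw [← Finset.sum_smul, hlam_mem.2, one_smul]
        rw [hz]
        nth_rewrite 1 [h1]
        rw [← Finset.sum_sub_distrib]
        exact Finset.sum_congr rfl fun j _ => (smul_sub _ _ _).symm
      show 0 ≤ ⟪F v.1, v.1 - z⟫
      rw [hdecomp, inner_sum]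
      have hterm : ∀ j : {i // i ∈ u}, ⟪F v.1, lam j • (v.1 - j.1.1)⟫
          = B ⟨v, hv⟩ j * lam j := by
        intro j
        rw [real_inner_smul_right]
        simp only [hB]
        ring
      rw [Finset.sum_congr rfl fun j _ => hterm j]
      exact hlam ⟨v, hv⟩
  obtain ⟨z, hzK, hz⟩ := hmain
  refine ⟨z, hzK, fun v hv => ?_⟩
  exact Set.mem_iInter.mp hz ⟨v, hv⟩

/-- Key structural lemma: for a monotone continuous map on the unit ball, any point `w`
not in `Q '' (ball 0 r)` is "seen outward" from some sphere point: there is `z` with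
`‖z‖ = r` and `⟪w - Q z, z⟫ ≥ r * ‖w - Q z‖`. -/
lemma key (d : ℕ) (Q : EuclideanSpace ℝ (Fin d) → EuclideanSpace ℝ (Fin d))
    (hmono : ∀ u v, u ∈ ball (0 : EuclideanSpace ℝ (Fin d)) 1 →
      v ∈ ball (0 : EuclideanSpace ℝ (Fin d)) 1 → ⟪u - v, Q u - Q v⟫ ≥ 0)
    (hQc : ContinuousOn Q (ball (0 : EuclideanSpace ℝ (Fin d)) 1))
    (r : ℝ) (hr : r ∈ Set.Ioo (0 : ℝ) 1) (w : EuclideanSpace ℝ (Fin d))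
    (hw : w ∉ Q '' ball (0 : EuclideanSpace ℝ (Fin d)) r) :
    ∃ z : EuclideanSpace ℝ (Fin d), ‖z‖ = r ∧ r * ‖w - Q z‖ ≤ ⟪w - Q z, z⟫ := by
  obtain ⟨hr0, hr1⟩ := hr
  set K : Set (EuclideanSpace ℝ (Fin d)) := closedBall 0 r with hK
  have hKsub : K ⊆ ball (0 : EuclideanSpace ℝ (Fin d)) 1 := closedBall_subset_ball hr1
  have hKc : Convex ℝ K := convex_closedBall _ _
  obtain ⟨z, hzK, hweak⟩ := minty_weak (fun v => Q v - w) K (isCompact_closedBall 0 r) hKc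
    ⟨0, mem_closedBall_self hr0.le⟩
    (fun u hu v hv => by
      show 0 ≤ ⟪u - v, (Q u - w) - (Q v - w)⟫
      have h : (Q u - w) - (Q v - w) = Q u - Q v := by abel
      rw [h]; exact hmono u v (hKsub hu) (hKsub hv))
  -- upgrade to the strong variational inequality by continuity
  have hstrong : ∀ v ∈ K, 0 ≤ ⟪Q z - w, v - z⟫ := by
    intro v hv
    set t : ℕ → ℝ := fun n => 1 / (n + 1) with htdef
    have ht_pos : ∀ n, 0 < t n := fun n => by positivity
    have ht_le : ∀ n, t n ≤ 1 := fun n => by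
      rw [htdef]
      rw [div_le_one (by positivity)]
      simp
    set p : ℕ → EuclideanSpace ℝ (Fin d) := fun n => z + t n • (v - z) with hpdef
    have hp_mem : ∀ n, p n ∈ K := by
      intro n
      have hcomb := hKc hzK hv (a := 1 - t n) (b := t n)
        (by linarith [ht_le n]) (ht_pos n).le (by ring)
      have : (1 - t n) • z + t n • v = p n := by
        rw [hpdef]
        simp only [sub_smul, smul_sub, one_smul]
        abel
      rwa [this] at hcomb
    have hterm : ∀ n, 0 ≤ ⟪Q (p n) - w, v - z⟫ := by
      intro n
      have h1 := hweak (p n) (hp_mem n)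
      have h2 : p n - z = t n • (v - z) := by
        show z + t n • (v - z) - z = t n • (v - z)
        exact add_sub_cancel_left _ _
      rw [h2, real_inner_smul_right] at h1
      exact nonneg_of_mul_nonneg_right h1 (ht_pos n)
    have htlim : Filter.Tendsto t Filter.atTop (nhds 0) :=
      tendsto_one_div_add_atTop_nhds_zero_nat
    have hplim : Filter.Tendsto p Filter.atTop (nhds z) := by
      have := (htlim.smul_const (v - z)).const_add z
      simpa using this
    have hQplim : Filter.Tendsto (fun n => Q (p n)) Filter.atTop (nhds (Q z)) := by
      have hcw : ContinuousWithinAt Q (ball (0 : EuclideanSpace ℝ (Fin d)) 1) z := hQc.continuousWithinAt (hKsub hzK)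
      exact hcw.tendsto.comp (tendsto_nhdsWithin_of_tendsto_nhds_of_eventually_within _ hplim
        (Filter.Eventually.of_forall fun n => hKsub (hp_mem n)))
    have hfinal : Filter.Tendsto (fun n => ⟪Q (p n) - w, v - z⟫) Filter.atTop
        (nhds ⟪Q z - w, v - z⟫) :=
      (hQplim.sub tendsto_const_nhds).inner tendsto_const_nhds
    exact ge_of_tendsto' hfinal hterm
  by_cases hzlt : ‖z‖ < r
  · -- interior solution : then Q z = w, contradicting hw
    exfalso
    have hall : ∀ u : EuclideanSpace ℝ (Fin d), 0 ≤ ⟪Q z - w, u⟫ := by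
      intro u
      by_cases hu : u = 0
      · simp [hu]
      have hu0 : 0 < ‖u‖ := norm_pos_iff.mpr hu
      set s : ℝ := (r - ‖z‖) / ‖u‖ with hs
      have hs0 : 0 < s := div_pos (by linarith) hu0
      have hmem : z + s • u ∈ K := by
        rw [hK, mem_closedBall_zero_iff]
        calc ‖z + s • u‖ ≤ ‖z‖ + ‖s • u‖ := norm_add_le _ _
          _ = ‖z‖ + s * ‖u‖ := by rw [norm_smul, Real.norm_of_nonneg hs0.le]
          _ = r := by rw [hs]; field_simp; ring
      have := hstrong _ hmem
      have h2 : (z + s • u) - z = s • u := add_sub_cancel_left _ _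
      rw [h2, real_inner_smul_right] at this
      exact nonneg_of_mul_nonneg_right this hs0
    have hzero : Q z - w = 0 := by
      have h1 := hall (w - Q z)
      have h2 : w - Q z = -(Q z - w) := by abel
      rw [h2, inner_neg_right, real_inner_self_eq_norm_sq] at h1
      have h3 : ‖Q z - w‖ ^ 2 ≤ 0 := by linarith
      have h4 : ‖Q z - w‖ = 0 := by nlinarith [norm_nonneg (Q z - w)]
      exact norm_eq_zero.mp h4
    exact hw ⟨z, mem_ball_zero_iff.mpr hzlt, by rw [← sub_eq_zero]; exact hzero⟩
  · have hznorm : ‖z‖ = r := le_antisymm (mem_closedBall_zero_iff.mp hzK) (not_lt.mp hzlt)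
    refine ⟨z, hznorm, ?_⟩
    set q : EuclideanSpace ℝ (Fin d) := w - Q z with hq
    by_cases hq0 : q = 0
    · rw [hq0]; simp
    have hqn : 0 < ‖q‖ := norm_pos_iff.mpr hq0
    set v : EuclideanSpace ℝ (Fin d) := (r / ‖q‖) • q with hv
    have hvK : v ∈ K := by
      rw [hK, mem_closedBall_zero_iff, hv, norm_smul, Real.norm_of_nonneg (by positivity)]
      rw [div_mul_cancel₀ _ (ne_of_gt hqn)]
    have h1 := hstrong v hvK
    have h2 : Q z - w = -q := by rw [hq]; abel
    rw [h2, inner_neg_left, inner_sub_right, hv, real_inner_smul_right,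
      real_inner_self_eq_norm_sq] at h1
    have h3 : r / ‖q‖ * ‖q‖ ^ 2 = r * ‖q‖ := by field_simp
    rw [h3] at h1
    linarith

/-- Lighthouse-convexity of quantile regions: if `Q` is a monotone map on the open unit
ball which is a homeomorphism onto its image, then from every boundary point `y` of
`Q(rB_d)` (`0 < r < 1`) there is a ray emanating from `y` meeting the closure of
`Q(rB_d)` only at `y`. -/
theorem quantile_region_lighthouse (d : ℕ)
    (Q : EuclideanSpace ℝ (Fin d) → EuclideanSpace ℝ (Fin d))
    (hmono : ∀ u v, u ∈ ball (0 : EuclideanSpace ℝ (Fin d)) 1 →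
      v ∈ ball (0 : EuclideanSpace ℝ (Fin d)) 1 → ⟪u - v, Q u - Q v⟫ ≥ 0)
    (hemb : Topology.IsEmbedding ((ball (0 : EuclideanSpace ℝ (Fin d)) 1).restrict Q))
    (r : ℝ) (hr : r ∈ Set.Ioo (0 : ℝ) 1)
    (y : EuclideanSpace ℝ (Fin d))
    (hy : y ∈ frontier (Q '' ball (0 : EuclideanSpace ℝ (Fin d)) r)) :
    ∃ s : EuclideanSpace ℝ (Fin d), s ≠ 0 ∧
      ∀ t : ℝ, 0 < t → y + t • s ∉ closure (Q '' ball (0 : EuclideanSpace ℝ (Fin d)) r) := by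
  obtain ⟨hr0, hr1⟩ := hr
  have hQc : ContinuousOn Q (ball (0 : EuclideanSpace ℝ (Fin d)) 1) :=
    continuousOn_iff_continuous_restrict.mpr hemb.continuous
  have hKsub : closedBall (0 : EuclideanSpace ℝ (Fin d)) r ⊆ ball 0 1 :=
    closedBall_subset_ball hr1
  have hKcomp : IsCompact (Q '' closedBall (0 : EuclideanSpace ℝ (Fin d)) r) :=
    (isCompact_closedBall 0 r).image_of_continuousOn (hQc.mono hKsub)
  have hSsub : closure (Q '' ball (0 : EuclideanSpace ℝ (Fin d)) r)
      ⊆ Q '' closedBall 0 r :=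
    closure_minimal (Set.image_mono ball_subset_closedBall) hKcomp.isClosed
  have hyS : y ∈ closure (Q '' ball (0 : EuclideanSpace ℝ (Fin d)) r) :=
    frontier_subset_closure hy
  obtain ⟨x, hxK, hQx⟩ := hSsub hyS
  have hinj : ∀ a b : EuclideanSpace ℝ (Fin d), a ∈ ball (0 : EuclideanSpace ℝ (Fin d)) 1 →
      b ∈ ball (0 : EuclideanSpace ℝ (Fin d)) 1 → Q a = Q b → a = b := by
    intro a b ha hb hab
    have h : (⟨a, ha⟩ : ball (0 : EuclideanSpace ℝ (Fin d)) 1) = ⟨b, hb⟩ :=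
      hemb.injective (show (ball (0 : EuclideanSpace ℝ (Fin d)) 1).restrict Q ⟨a, ha⟩ =
        (ball (0 : EuclideanSpace ℝ (Fin d)) 1).restrict Q ⟨b, hb⟩ from hab)
    exact congrArg Subtype.val h
  -- Step 1 : the preimage of `y` lies on the sphere of radius `r`.
  have hxnorm : ‖x‖ = r := by
    have hyC : y ∈ closure ((Q '' ball (0 : EuclideanSpace ℝ (Fin d)) r)ᶜ) := by
      have h := hy
      rw [frontier_eq_closure_inter_closure] at h
      exact h.2
    obtain ⟨w, hwmem, hwlim⟩ := mem_closure_iff_seq_limit.mp hyC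
    choose z hz hineq using fun n => key d Q hmono hQc r ⟨hr0, hr1⟩ (w n) (hwmem n)
    have hzs : ∀ n, z n ∈ sphere (0 : EuclideanSpace ℝ (Fin d)) r := by
      intro n
      rw [mem_sphere_zero_iff_norm]
      exact hz n
    obtain ⟨zl, hzls, φ, hφ, hzlim⟩ :=
      (isCompact_sphere (0 : EuclideanSpace ℝ (Fin d)) r).tendsto_subseq hzs
    have hzlK : zl ∈ closedBall (0 : EuclideanSpace ℝ (Fin d)) r :=
      sphere_subset_closedBall hzls
    have hQzlim : Filter.Tendsto (fun n => Q (z (φ n))) Filter.atTop (nhds (Q zl)) := by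
      have hcw : ContinuousWithinAt Q (ball (0 : EuclideanSpace ℝ (Fin d)) 1) zl :=
        hQc.continuousWithinAt (hKsub hzlK)
      exact hcw.tendsto.comp (tendsto_nhdsWithin_of_tendsto_nhds_of_eventually_within _ hzlim
        (Filter.Eventually.of_forall fun n => hKsub (sphere_subset_closedBall (hzs (φ n)))))
    have hwφ : Filter.Tendsto (fun n => w (φ n)) Filter.atTop (nhds y) :=
      hwlim.comp hφ.tendsto_atTop
    have hA : Filter.Tendsto (fun n => r * ‖w (φ n) - Q (z (φ n))‖) Filter.atTop
        (nhds (r * ‖y - Q zl‖)) :=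
      tendsto_const_nhds.mul ((hwφ.sub hQzlim).norm)
    have hB : Filter.Tendsto (fun n => (⟪w (φ n) - Q (z (φ n)), z (φ n)⟫ : ℝ)) Filter.atTop
        (nhds ⟪y - Q zl, zl⟫) :=
      (hwφ.sub hQzlim).inner hzlim
    have hlim : r * ‖y - Q zl‖ ≤ ⟪y - Q zl, zl⟫ :=
      le_of_tendsto_of_tendsto' hA hB (fun n => hineq (φ n))
    have hzlnorm : ‖zl‖ = r := mem_sphere_zero_iff_norm.mp hzls
    by_cases hp0 : y - Q zl = 0
    · -- then `y = Q zl` and injectivity forces `x = zl`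
      have hyz : Q zl = y := by
        rw [← sub_eq_zero]; rw [← neg_sub]; rw [hp0]; simp
      have hxz : x = zl := hinj x zl (hKsub hxK) (hKsub hzlK) (by rw [hQx, ← hyz])
      rw [hxz]; exact hzlnorm
    · -- otherwise monotonicity forces `r ≤ ‖x‖`
      have hm := hmono zl x (hKsub hzlK) (hKsub hxK)
      have hQzQx : Q zl - Q x = -(y - Q zl) := by rw [hQx]; abel
      rw [hQzQx, inner_neg_right] at hm
      have hm2 : ⟪zl - x, y - Q zl⟫ ≤ 0 := by linarith [hm]
      rw [inner_sub_left] at hm2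
      have hxp : ⟪x, y - Q zl⟫ ≤ ‖x‖ * ‖y - Q zl‖ := real_inner_le_norm _ _
      have hcomm : (⟪y - Q zl, zl⟫ : ℝ) = ⟪zl, y - Q zl⟫ := real_inner_comm _ _
      have hplt : 0 < ‖y - Q zl‖ := norm_pos_iff.mpr hp0
      have hrx : r * ‖y - Q zl‖ ≤ ‖x‖ * ‖y - Q zl‖ := by
        calc r * ‖y - Q zl‖ ≤ ⟪y - Q zl, zl⟫ := hlim
          _ = ⟪zl, y - Q zl⟫ := hcomm
          _ ≤ ⟪x, y - Q zl⟫ := by linarith [hm2]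
          _ ≤ ‖x‖ * ‖y - Q zl‖ := hxp
      have : r ≤ ‖x‖ := le_of_mul_le_mul_right hrx hplt
      exact le_antisymm (mem_closedBall_zero_iff.mp hxK) this
  -- Step 2 : the ray in direction `x` works.
  refine ⟨x, ?_, ?_⟩
  · intro hx0
    rw [hx0] at hxnorm
    simp at hxnorm
    exact absurd hxnorm.symm (ne_of_gt hr0)
  · intro t ht hmem
    obtain ⟨v, hvK, hQv⟩ := hSsub hmem
    have hm := hmono x v (hKsub hxK) (hKsub hvK)
    have hQxQv : Q x - Q v = -(t • x) := by rw [hQx, hQv]; abel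
    rw [hQxQv, inner_neg_right, real_inner_smul_right] at hm
    have hm2 : t * ⟪x - v, x⟫ ≤ 0 := by linarith [hm]
    have hm3 : ⟪x - v, x⟫ ≤ 0 := by
      by_contra hpos
      push_neg at hpos
      nlinarith
    rw [inner_sub_left, real_inner_self_eq_norm_sq] at hm3
    have hvx : ‖x‖ ^ 2 ≤ ⟪x, v⟫ := by
      rw [real_inner_comm]; linarith
    have hvn : ‖v‖ ≤ r := mem_closedBall_zero_iff.mp hvK
    rw [hxnorm] at hvx
    have hsq : ‖x - v‖ ^ 2 ≤ 0 := by
      rw [norm_sub_sq_real, hxnorm]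
      nlinarith [hvx, hvn, norm_nonneg v]
    have hxv : x = v := by
      have h4 : ‖x - v‖ = 0 := by nlinarith [norm_nonneg (x - v), sq_nonneg (‖x - v‖)]
      rw [← sub_eq_zero]
      exact norm_eq_zero.mp h4
    have hy2 : y + t • x = y := by rw [← hQv, ← hxv, hQx]
    have htx : t • x = 0 := by
      have := congrArg (fun a => a - y) hy2
      simpa using this
    rcases smul_eq_zero.mp htx with h | h
    · exact absurd h (ne_of_gt ht)
    · rw [h] at hxnorm
      simp at hxnorm
      exact absurd hxnorm.symm (ne_of_gt hr0)
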